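/- arXiv:2112.00541 — 2 statements merged into one kernel-verified Lean document; each statement's English description precedes it below -/
import Mathlib

section
/- Let H be a bialgebra over a commutative ring R, F a Drinfel'd twist on H with R-matrix ℛ := F₂₁ · F⁻¹ and ℛ⁻¹ = τ(ℛ) = Σ_k R_k ⊗ R^k, and let A be an H-module algebra whose underlying algebra is commutative. Then the star-product is braided commutative: a ⋆ b = Σ_k R_k(b) ⋆ R^k(a) for all a, b ∈ A. -/
open scoped TensorProduct

noncomputable section

/-- `Δ ⊗ id` as an algebra homomorphism `H ⊗ H → (H ⊗ H) ⊗ H`. -/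
def comulTensorId (R H : Type*) [CommRing R] [Ring H] [Bialgebra R H] :
    (H ⊗[R] H) →ₐ[R] (H ⊗[R] H) ⊗[R] H :=
  Algebra.TensorProduct.map (Bialgebra.comulAlgHom R H) (AlgHom.id R H)

/-- `id ⊗ Δ` as an algebra homomorphism `H ⊗ H → H ⊗ (H ⊗ H)`. -/
def idTensorComul (R H : Type*) [CommRing R] [Ring H] [Bialgebra R H] :
    (H ⊗[R] H) →ₐ[R] H ⊗[R] (H ⊗[R] H) :=
  Algebra.TensorProduct.map (AlgHom.id R H) (Bialgebra.comulAlgHom R H)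

/-- `F` is a Drinfel'd twist on the bialgebra `H` with two-sided inverse `Finv`:
it is invertible and satisfies the 2-cocycle condition
`(F ⊗ 1) · (Δ ⊗ id)(F) = (1 ⊗ F) · (id ⊗ Δ)(F)` in `H ⊗ H ⊗ H`. -/
def IsDrinfeldTwist (R : Type*) {H : Type*} [CommRing R] [Ring H] [Bialgebra R H]
    (F Finv : H ⊗[R] H) : Prop :=
  F * Finv = 1 ∧ Finv * F = 1 ∧
    (TensorProduct.assoc R H H H) ((F ⊗ₜ[R] (1 : H)) * comulTensorId R H F) =
      ((1 : H) ⊗ₜ[R] F) * idTensorComul R H F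

/-- The `R`-matrix `ℛ := F₂₁ · F⁻¹` associated to a Drinfel'd twist, where
`F₂₁ = τ(F)` and `τ` is the flip of `H ⊗ H`. -/
def Rmat (R : Type*) {H : Type*} [CommRing R] [Ring H] [Bialgebra R H]
    (F Finv : H ⊗[R] H) : H ⊗[R] H :=
  (Algebra.TensorProduct.comm R H H) F * Finv

/-- The action of an element of `H ⊗ H` on `M ⊗ N`, acting with the first leg on `M`
and the second leg on `N` through the given representations. -/
def legAct {R H : Type*} [CommRing R] [Ring H] [Algebra R H]
    {M N : Type*} [AddCommGroup M] [Module R M] [AddCommGroup N] [Module R N]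
    (ρM : H →ₐ[R] Module.End R M) (ρN : H →ₐ[R] Module.End R N) :
    H ⊗[R] H →ₗ[R] (M ⊗[R] N →ₗ[R] M ⊗[R] N) :=
  (TensorProduct.homTensorHomMap (RingHom.id R) M N M N).comp
    (TensorProduct.map ρM.toLinearMap ρN.toLinearMap)

/-- `ρ` makes the `R`-algebra `A` into an `H`-module algebra:
`ρ(h)(a·b) = Σ ρ(h₍₁₎)(a) · ρ(h₍₂₎)(b)`. -/
def IsModuleAlgebra (R : Type*) {H A : Type*} [CommRing R] [Ring H] [Bialgebra R H]
    [Ring A] [Algebra R A] (ρ : H →ₐ[R] Module.End R A) : Prop :=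
  ∀ (h : H) (a b : A),
    ρ h (a * b) =
      LinearMap.mul' R A (legAct ρ ρ (Coalgebra.comul (R := R) h) (a ⊗ₜ[R] b))

/-- The star-product `a ⋆ b := Σ f̄ᵏ(a) · f̄ₖ(b)`, as a linear map on `A ⊗ A`. -/
def starProd {R H A : Type*} [CommRing R] [Ring H] [Bialgebra R H] [Ring A] [Algebra R A]
    (ρ : H →ₐ[R] Module.End R A) (Finv : H ⊗[R] H) : A ⊗[R] A →ₗ[R] A :=
  (LinearMap.mul' R A).comp (legAct ρ ρ Finv)


section Aux
variable {R H : Type*} [CommRing R] [Ring H] [Algebra R H]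
  {M N : Type*} [AddCommGroup M] [Module R M] [AddCommGroup N] [Module R N]
  (ρM : H →ₐ[R] Module.End R M) (ρN : H →ₐ[R] Module.End R N)

lemma legAct_tmul (h k : H) (m : M) (n : N) :
    legAct ρM ρN (h ⊗ₜ[R] k) (m ⊗ₜ[R] n) = ρM h m ⊗ₜ[R] ρN k n := by
  simp [legAct]

lemma legAct_mul_apply (x y : H ⊗[R] H) (v : M ⊗[R] N) :
    legAct ρM ρN (x * y) v = legAct ρM ρN x (legAct ρM ρN y v) := by
  induction x using TensorProduct.induction_on with
  | zero => simp
  | tmul h k =>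
    induction y using TensorProduct.induction_on with
    | zero => simp
    | tmul h' k' =>
      induction v using TensorProduct.induction_on with
      | zero => simp
      | tmul m n =>
        simp [Algebra.TensorProduct.tmul_mul_tmul, legAct_tmul, map_mul,
          Module.End.mul_apply]
      | add v w hv hw => simp only [map_add, hv, hw]
    | add y1 y2 h1 h2 => simp only [mul_add, map_add, LinearMap.add_apply, h1, h2]
  | add x1 x2 h1 h2 => simp only [add_mul, map_add, LinearMap.add_apply, h1, h2]

lemma legAct_one_apply (v : M ⊗[R] N) : legAct ρM ρN 1 v = v := by
  induction v using TensorProduct.induction_on with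
  | zero => simp
  | tmul m n => simp [Algebra.TensorProduct.one_def, legAct_tmul]
  | add v w hv hw => simp only [map_add, hv, hw]

end Aux

lemma mul'_legAct_comm {R H A : Type*} [CommRing R] [Ring H] [Algebra R H]
    [CommRing A] [Algebra R A] (ρ : H →ₐ[R] Module.End R A)
    (x : H ⊗[R] H) (a b : A) :
    LinearMap.mul' R A (legAct ρ ρ ((Algebra.TensorProduct.comm R H H) x) (b ⊗ₜ[R] a)) =
      LinearMap.mul' R A (legAct ρ ρ x (a ⊗ₜ[R] b)) := by
  induction x using TensorProduct.induction_on with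
  | zero => simp
  | tmul h k => simp [legAct_tmul, mul_comm]
  | add x y hx hy => simp only [map_add, LinearMap.add_apply, hx, hy]

/-- For a Drinfel'd twist on `H` and an `H`-module algebra `A` whose
underlying algebra is commutative, the star-product is braided commutative:
`a ⋆ b = Σ R_k(b) ⋆ R^k(a)`, where `ℛ⁻¹ = τ(ℛ) = Σ_k R_k ⊗ R^k`. -/
theorem starProd_braided_commutative
    (R : Type*) [CommRing R] (H : Type*) [Ring H] [Bialgebra R H]
    (A : Type*) [CommRing A] [Algebra R A]
    (ρ : H →ₐ[R] Module.End R A) (hA : IsModuleAlgebra R ρ)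
    (F Finv : H ⊗[R] H) (hF : IsDrinfeldTwist R F Finv) :
    ∀ a b : A,
      starProd ρ Finv (a ⊗ₜ[R] b) =
        starProd ρ Finv
          (legAct ρ ρ ((Algebra.TensorProduct.comm R H H) (Rmat R F Finv))
            (b ⊗ₜ[R] a)) := by
  intro a b
  have hτ : (Algebra.TensorProduct.comm R H H) (Rmat R F Finv) =
      F * (Algebra.TensorProduct.comm R H H) Finv := by
    simp only [Rmat, map_mul]
    congr 1
    have : ∀ z : H ⊗[R] H, (Algebra.TensorProduct.comm R H H)
        ((Algebra.TensorProduct.comm R H H) z) = z := by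
      intro z
      induction z using TensorProduct.induction_on with
      | zero => simp
      | tmul h k => simp
      | add x y hx hy => simp only [map_add, hx, hy]
    exact this F
  rw [hτ]
  simp only [starProd, LinearMap.comp_apply]
  rw [legAct_mul_apply, ← legAct_mul_apply, hF.2.1, legAct_one_apply,
    mul'_legAct_comm]
end
end

section
/- Let H be a bialgebra over a commutative ring R, F a Drinfel'd twist on H with R-matrix ℛ := F₂₁ · F⁻¹ and ℛ⁻¹ = τ(ℛ) = Σ_k R_k ⊗ R^k, let V be an H-module (with R-algebra homomorphism ρ : H → End_R(V)), and let b : V × V → R be a symmetric R-bilinear form. Then the twisted pairing ⟨v, w⟩_⋆ := Σ_k b(f̄^k(v), f̄_k(w)) is braided symmetric: ⟨v, w⟩_⋆ = Σ_k ⟨R_k(w), R^k(v)⟩_⋆ for all v, w ∈ V. -/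
open scoped TensorProduct

noncomputable section

/-- The twisted pairing `⟨v, w⟩_⋆ := Σ b(f̄ᵏ(v), f̄ₖ(w))`, as a linear map on `V ⊗ V`. -/
def starPair {R H V : Type*} [CommRing R] [Ring H] [Bialgebra R H]
    [AddCommGroup V] [Module R V] (ρ : H →ₐ[R] Module.End R V)
    (b : V →ₗ[R] V →ₗ[R] R) (Finv : H ⊗[R] H) : V ⊗[R] V →ₗ[R] R :=
  (TensorProduct.lift b).comp (legAct ρ ρ Finv)


lemma legAct_tmul_s13 {R H : Type*} [CommRing R] [Ring H] [Algebra R H]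
    {M N : Type*} [AddCommGroup M] [Module R M] [AddCommGroup N] [Module R N]
    (ρM : H →ₐ[R] Module.End R M) (ρN : H →ₐ[R] Module.End R N)
    (a c : H) (m : M) (n : N) :
    legAct ρM ρN (a ⊗ₜ[R] c) (m ⊗ₜ[R] n) = (ρM a m) ⊗ₜ[R] (ρN c n) := by
  simp [legAct]

lemma legAct_mul {R H : Type*} [CommRing R] [Ring H] [Algebra R H]
    {M N : Type*} [AddCommGroup M] [Module R M] [AddCommGroup N] [Module R N]
    (ρM : H →ₐ[R] Module.End R M) (ρN : H →ₐ[R] Module.End R N)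
    (x y : H ⊗[R] H) (t : M ⊗[R] N) :
    legAct ρM ρN (x * y) t = legAct ρM ρN x (legAct ρM ρN y t) := by
  induction x using TensorProduct.induction_on with
  | zero => simp
  | add x₁ x₂ h₁ h₂ => simp [add_mul, h₁, h₂]
  | tmul a c =>
    induction y using TensorProduct.induction_on with
    | zero => simp
    | add y₁ y₂ h₁ h₂ => simp [mul_add, h₁, h₂]
    | tmul a' c' =>
      induction t using TensorProduct.induction_on with
      | zero => simp
      | add t₁ t₂ h₁ h₂ =>
        simp only [map_add]
        rw [h₁, h₂]
      | tmul m n =>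
        simp [Algebra.TensorProduct.tmul_mul_tmul, legAct_tmul_s13, Module.End.mul_apply]

lemma starPair_comm {R H V : Type*} [CommRing R] [Ring H] [Bialgebra R H]
    [AddCommGroup V] [Module R V] (ρ : H →ₐ[R] Module.End R V)
    (b : V →ₗ[R] V →ₗ[R] R) (hb : ∀ v w : V, b v w = b w v)
    (x : H ⊗[R] H) (v w : V) :
    TensorProduct.lift b
        (legAct ρ ρ ((Algebra.TensorProduct.comm R H H) x) (w ⊗ₜ[R] v)) =
      TensorProduct.lift b (legAct ρ ρ x (v ⊗ₜ[R] w)) := by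
  induction x using TensorProduct.induction_on with
  | zero => simp
  | add x₁ x₂ h₁ h₂ => simp [h₁, h₂]
  | tmul a c => simp [legAct_tmul_s13, hb]

/-- For a Drinfel'd twist on `H`, an `H`-module `V`, and a symmetric
`R`-bilinear form `b` on `V`, the twisted pairing `⟨v, w⟩_⋆ := Σ b(f̄ᵏ(v), f̄ₖ(w))` is
braided symmetric: `⟨v, w⟩_⋆ = Σ_k ⟨R_k(w), R^k(v)⟩_⋆`,
where `ℛ⁻¹ = τ(ℛ) = Σ_k R_k ⊗ R^k`. -/
theorem starPair_braided_symmetric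
    (R : Type*) [CommRing R] (H : Type*) [Ring H] [Bialgebra R H]
    (V : Type*) [AddCommGroup V] [Module R V]
    (ρ : H →ₐ[R] Module.End R V)
    (b : V →ₗ[R] V →ₗ[R] R) (hb : ∀ v w : V, b v w = b w v)
    (F Finv : H ⊗[R] H) (hF : IsDrinfeldTwist R F Finv) :
    ∀ v w : V,
      starPair ρ b Finv (v ⊗ₜ[R] w) =
        starPair ρ b Finv
          (legAct ρ ρ ((Algebra.TensorProduct.comm R H H) (Rmat R F Finv))
            (w ⊗ₜ[R] v)) := by
  intro v w
  obtain ⟨hFi, hiF, _⟩ := hF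
  have hcomm : (Algebra.TensorProduct.comm R H H) (Rmat R F Finv)
      = F * (Algebra.TensorProduct.comm R H H) Finv := by
    have h2 : ∀ x : H ⊗[R] H,
        (Algebra.TensorProduct.comm R H H) ((Algebra.TensorProduct.comm R H H) x) = x := by
      intro x
      induction x using TensorProduct.induction_on with
      | zero => simp
      | add x y hx hy => simp [hx, hy]
      | tmul a c => simp
    simp [Rmat, map_mul, h2]
  have key : Finv * ((Algebra.TensorProduct.comm R H H) (Rmat R F Finv))
      = (Algebra.TensorProduct.comm R H H) Finv := by
    rw [hcomm, ← mul_assoc, hiF, one_mul]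
  calc starPair ρ b Finv (v ⊗ₜ[R] w)
      = TensorProduct.lift b (legAct ρ ρ Finv (v ⊗ₜ[R] w)) := rfl
    _ = TensorProduct.lift b
          (legAct ρ ρ ((Algebra.TensorProduct.comm R H H) Finv) (w ⊗ₜ[R] v)) :=
        (starPair_comm ρ b hb Finv v w).symm
    _ = TensorProduct.lift b
          (legAct ρ ρ (Finv * ((Algebra.TensorProduct.comm R H H) (Rmat R F Finv)))
            (w ⊗ₜ[R] v)) := by rw [key]
    _ = _ := by rw [legAct_mul]; rfl
end
end
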